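/- Let q ≥ 2. The coefficient of t^a in the power series expansion of f(t) = (1 - t^{q^3-1})(1 - t^{q^3-q}) / ((1 - t^{q^2-1})(1 - t^{q^2-q})), for 0 ≤ a ≤ q^3 - q^2, equals 1 if a is a nonnegative integer linear combination of q^2 - 1 and q^2 - q, and 0 otherwise. -/

import Mathlib

open scoped Classical

open PowerSeries

set_option maxHeartbeats 1600000 in
private lemma uniq_aux (q : ℕ) (hq : 2 ≤ q) (m n m' n' : ℕ)
    (h : m * (q ^ 2 - 1) + n * (q ^ 2 - q) = m' * (q ^ 2 - 1) + n' * (q ^ 2 - q))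
    (hb : m * (q ^ 2 - 1) + n * (q ^ 2 - q) ≤ q ^ 3 - q ^ 2) : m = m' ∧ n = n' := by
  have h1 : (1 : ℕ) ≤ q ^ 2 := by nlinarith
  have h2 : q ≤ q ^ 2 := by nlinarith
  have h3 : q ^ 2 ≤ q ^ 3 := by nlinarith
  zify [h1, h2, h3] at h hb
  have hq' : (2 : ℤ) ≤ q := by exact_mod_cast hq
  have hm0 : (0 : ℤ) ≤ m := Int.natCast_nonneg m
  have hn0 : (0 : ℤ) ≤ n := Int.natCast_nonneg n
  have hm'0 : (0 : ℤ) ≤ m' := Int.natCast_nonneg m'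
  have hn'0 : (0 : ℤ) ≤ n' := Int.natCast_nonneg n'
  have hcpos : (0 : ℤ) ≤ (q : ℤ) ^ 2 - 1 := by nlinarith
  have hdpos : (0 : ℤ) ≤ (q : ℤ) ^ 2 - q := by nlinarith
  have hmq : (m : ℤ) < q := by
    by_contra hcon
    push_neg at hcon
    nlinarith [mul_nonneg hn0 hdpos, mul_nonneg (sub_nonneg.mpr hcon) hcpos]
  have hm'q : (m' : ℤ) < q := by
    by_contra hcon
    push_neg at hcon
    nlinarith [mul_nonneg hn'0 hdpos, mul_nonneg (sub_nonneg.mpr hcon) hcpos]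
  have key : ((m : ℤ) - m') * (q + 1) * ((q : ℤ) - 1) = ((n' : ℤ) - n) * q * ((q : ℤ) - 1) := by
    linear_combination h
  have hqne : ((q : ℤ) - 1) ≠ 0 := sub_ne_zero.mpr (by linarith)
  have key2 : ((m : ℤ) - m') * (q + 1) = ((n' : ℤ) - n) * q := mul_right_cancel₀ hqne key
  obtain ⟨k, hk⟩ : ∃ k : ℤ, (m : ℤ) - m' = k * q :=
    ⟨((n' : ℤ) - n) - ((m : ℤ) - m'), by linear_combination key2⟩
  have hmm : m = m' := by
    have h4 : (m : ℤ) = m' := by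
      rcases lt_trichotomy k 0 with hk0 | hk0 | hk0
      · have hk1 : k ≤ -1 := by linarith [Int.add_one_le_iff.mpr hk0]
        linarith [mul_le_mul_of_nonneg_right hk1 (by linarith : (0 : ℤ) ≤ (q : ℤ))]
      · rw [hk0, zero_mul] at hk; linarith
      · have hk1 : 1 ≤ k := hk0
        linarith [mul_le_mul_of_nonneg_right hk1 (by linarith : (0 : ℤ) ≤ (q : ℤ))]
    exact_mod_cast h4
  refine ⟨hmm, ?_⟩
  have hd : ((q : ℤ) ^ 2 - q) ≠ 0 := by nlinarith
  have hnn : (n : ℤ) * ((q : ℤ) ^ 2 - q) = n' * ((q : ℤ) ^ 2 - q) := by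
    rw [hmm] at h; linarith
  exact_mod_cast mul_right_cancel₀ hd hnn

/-- the coefficient of `t^a` (for `0 ≤ a ≤ q^3 - q^2`) in the power series
`f(t) = (1-t^{q^3-1})(1-t^{q^3-q}) · (∑_{i≥0} t^{i(q^2-1)}) · (∑_{j≥0} t^{j(q^2-q)})`
is `1` if `a` is a nonnegative integer combination of `q^2-1` and `q^2-q`, else `0`. -/
theorem statement3 (q : ℕ) (hq : 2 ≤ q) (a : ℕ) (ha : a ≤ q ^ 3 - q ^ 2) :
    PowerSeries.coeff (R := ℤ) a
      (((1 : PowerSeries ℤ) - (PowerSeries.X : PowerSeries ℤ) ^ (q ^ 3 - 1)) *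
        (1 - (PowerSeries.X : PowerSeries ℤ) ^ (q ^ 3 - q)) *
        (PowerSeries.mk fun i => if (q ^ 2 - 1) ∣ i then (1 : ℤ) else 0) *
        (PowerSeries.mk fun j => if (q ^ 2 - q) ∣ j then (1 : ℤ) else 0))
      = if ∃ m n : ℕ, a = m * (q ^ 2 - 1) + n * (q ^ 2 - q) then 1 else 0 := by
  have h1 : (1 : ℕ) ≤ q ^ 2 := by nlinarith
  have h2 : q < q ^ 2 := by nlinarith
  have h3 : q ^ 2 < q ^ 3 := by nlinarith
  have h1' : (1 : ℕ) ≤ q := by omega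
  have hc2c1 : q ^ 3 - q ≤ q ^ 3 - 1 := by
    apply Nat.sub_le_sub_left
    omega
  have halt : a < q ^ 3 - q := by
    have h4 : q < q ^ 3 := lt_trans h2 h3
    exact lt_of_le_of_lt ha (Nat.sub_lt_sub_left h4 h2)
  set A : PowerSeries ℤ := PowerSeries.mk fun i => if (q ^ 2 - 1) ∣ i then (1 : ℤ) else 0 with hA
  set B : PowerSeries ℤ := PowerSeries.mk fun j => if (q ^ 2 - q) ∣ j then (1 : ℤ) else 0 with hB
  have hdvd : (X : PowerSeries ℤ) ^ (q ^ 3 - q) ∣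
      ((1 - X ^ (q ^ 3 - 1)) * (1 - X ^ (q ^ 3 - q)) - 1) := by
    have e1 : (X : PowerSeries ℤ) ^ (q ^ 3 - 1) =
        X ^ (q ^ 3 - q) * X ^ ((q ^ 3 - 1) - (q ^ 3 - q)) := by
      rw [← pow_add]
      congr 1
      omega
    refine ⟨X ^ (q ^ 3 - 1) - X ^ ((q ^ 3 - 1) - (q ^ 3 - q)) - 1, ?_⟩
    rw [e1]
    ring
  have hzero : PowerSeries.coeff (R := ℤ) a
      (((1 - X ^ (q ^ 3 - 1)) * (1 - X ^ (q ^ 3 - q)) - 1) * (A * B)) = 0 :=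
    PowerSeries.X_pow_dvd_iff.mp (hdvd.mul_right (A * B)) a halt
  have expand : ((1 : PowerSeries ℤ) - X ^ (q ^ 3 - 1)) * (1 - X ^ (q ^ 3 - q)) * A * B =
      A * B + ((1 - X ^ (q ^ 3 - 1)) * (1 - X ^ (q ^ 3 - q)) - 1) * (A * B) := by
    ring
  rw [expand, map_add, hzero, add_zero, PowerSeries.coeff_mul]
  simp only [hA, hB, PowerSeries.coeff_mk]
  split_ifs with hex
  · obtain ⟨m, n, hmn⟩ := hex
    rw [Finset.sum_eq_single_of_mem (m * (q ^ 2 - 1), n * (q ^ 2 - q))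
        (Finset.HasAntidiagonal.mem_antidiagonal.mpr hmn.symm) ?_]
    · simp [dvd_mul_left]
    · rintro ⟨x, y⟩ hxy hne
      replace hxy := Finset.HasAntidiagonal.mem_antidiagonal.mp hxy
      by_cases hcx : (q ^ 2 - 1) ∣ x
      · by_cases hdy : (q ^ 2 - q) ∣ y
        · exfalso
          obtain ⟨m', rfl⟩ := hcx
          obtain ⟨n', rfl⟩ := hdy
          have heq : m * (q ^ 2 - 1) + n * (q ^ 2 - q) = m' * (q ^ 2 - 1) + n' * (q ^ 2 - q) := by
            rw [mul_comm m' (q ^ 2 - 1), mul_comm n' (q ^ 2 - q), hxy]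
            exact hmn.symm
          have hb : m * (q ^ 2 - 1) + n * (q ^ 2 - q) ≤ q ^ 3 - q ^ 2 := hmn ▸ ha
          obtain ⟨e1, e2⟩ := uniq_aux q hq m n m' n' heq hb
          exact hne (by rw [← e1, ← e2, mul_comm, mul_comm (q ^ 2 - q) n])
        · simp [hdy]
      · simp [hcx]
  · apply Finset.sum_eq_zero
    rintro ⟨x, y⟩ hxy
    replace hxy := Finset.HasAntidiagonal.mem_antidiagonal.mp hxy
    by_cases hcx : (q ^ 2 - 1) ∣ x
    · by_cases hdy : (q ^ 2 - q) ∣ y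
      · exfalso
        obtain ⟨m', rfl⟩ := hcx
        obtain ⟨n', rfl⟩ := hdy
        exact hex ⟨m', n', by rw [mul_comm m' (q ^ 2 - 1), mul_comm n' (q ^ 2 - q), hxy]⟩
      · simp [hdy]
    · simp [hcx]
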